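/- Let P ≥ 2 be an integer and let s_1, …, s_{P−1} ∈ (0,1). Suppose real numbers v⁺_1,…,v⁺_P and v⁻_1,…,v⁻_P satisfy the recurrences v⁺_p = s_p·(v⁻_p + 1) + (1 − s_p)·(v⁺_{p+1} + 1) for 1 ≤ p ≤ P−1 and v⁻_p = s_{p−1}·(v⁺_p + 1) + (1 − s_{p−1})·(v⁻_{p−1} + 1) for 2 ≤ p ≤ P, together with the boundary conditions v⁺_P = v⁻_P + 1 and v⁻_1 = 1. Then v⁻_P = P + 2·Σ_{p=1}^{P−1} (P − p)·s_p/(1 − s_p). -/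

import Mathlib

/-- Backward half of the round trip time computation for the generalized DEO
parallel tempering scheme: `v⁺ p` (resp. `v⁻ p`) is the expected number of
windows for an upward-moving (resp. downward-moving) particle at chain `p` to
reach the bottom chain `1`, and `s p` is the per-window rejection probability. -/
theorem deo_backward_hitting_time (P : ℕ) (hP : 2 ≤ P)
    (s vup vdown : ℕ → ℝ)
    (hs : ∀ p, 1 ≤ p → p ≤ P - 1 → s p ∈ Set.Ioo (0 : ℝ) 1)
    (hrec_up : ∀ p, 1 ≤ p → p ≤ P - 1 →
      vup p = s p * (vdown p + 1) + (1 - s p) * (vup (p + 1) + 1))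
    (hrec_down : ∀ p, 2 ≤ p → p ≤ P →
      vdown p = s (p - 1) * (vup p + 1) + (1 - s (p - 1)) * (vdown (p - 1) + 1))
    (hbd1 : vup P = vdown P + 1)
    (hbd2 : vdown 1 = 1) :
    vdown P = P + 2 * ∑ p ∈ Finset.Icc 1 (P - 1), ((P : ℝ) - p) * s p / (1 - s p) := by
  -- Step lemma: u_p = u_{p+1} + 2
  have hstep : ∀ p, 1 ≤ p → p ≤ P - 1 →
      vup p - vdown p = vup (p + 1) - vdown (p + 1) + 2 := by
    intro p h1 h2
    have hu := hrec_up p h1 h2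
    have hd := hrec_down (p + 1) (by omega) (by omega)
    simp only [Nat.add_sub_cancel] at hd
    linear_combination hu + hd
  -- u_{P-j} = 2j + 1
  have hu : ∀ j, j ≤ P - 1 → vup (P - j) - vdown (P - j) = 2 * j + 1 := by
    intro j
    induction j with
    | zero => intro _; simp [hbd1]
    | succ j ih =>
      intro hj
      have h3 : P - (j + 1) + 1 = P - j := by omega
      have hst := hstep (P - (j + 1)) (by omega) (by omega)
      rw [h3] at hst
      rw [hst, ih (by omega)]
      push_cast
      ring
  have hu' : ∀ p, 1 ≤ p → p ≤ P → vup p - vdown p = 2 * ((P : ℝ) - p) + 1 := by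
    intro p h1 h2
    have h3 : P - (P - p) = p := by omega
    have hh := hu (P - p) (by omega)
    rw [h3, Nat.cast_sub h2] at hh
    exact hh
  -- increment formula
  have hD : ∀ p, 1 ≤ p → p ≤ P - 1 →
      vdown (p + 1) = vdown p + (1 + 2 * ((P : ℝ) - p) * s p / (1 - s p)) := by
    intro p h1 h2
    obtain ⟨hs0, hs1⟩ := hs p h1 h2
    have hne : (1 : ℝ) - s p ≠ 0 := by linarith
    have hup := hrec_up p h1 h2
    have hd := hrec_down (p + 1) (by omega) (by omega)
    simp only [Nat.add_sub_cancel] at hd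
    have hup1 := hu' p h1 (by omega)
    have hX : (1 - s p) * (vup (p + 1) - vdown p) = 2 * ((P : ℝ) - p) := by
      linear_combination hup1 - hup
    field_simp
    linear_combination (1 - s p) * hd + s p * hX
  -- telescoping
  have htel := Finset.sum_range_sub (fun i => vdown (i + 1)) (P - 1)
  simp only [Nat.sub_add_cancel (by omega : 1 ≤ P)] at htel
  have hsum : ∑ i ∈ Finset.range (P - 1), (vdown (i + 1 + 1) - vdown (i + 1))
      = ∑ i ∈ Finset.range (P - 1),
        (1 + 2 * (((P : ℝ) - (i + 1)) * s (i + 1) / (1 - s (i + 1)))) := by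
    apply Finset.sum_congr rfl
    intro i hi
    rw [Finset.mem_range] at hi
    rw [hD (i + 1) (by omega) (by omega)]
    push_cast
    ring
  rw [hsum, Finset.sum_add_distrib, Finset.sum_const, Finset.card_range,
    ← Finset.mul_sum] at htel
  have hIcc : ∑ p ∈ Finset.Icc 1 (P - 1), ((P : ℝ) - p) * s p / (1 - s p)
      = ∑ i ∈ Finset.range (P - 1), ((P : ℝ) - (1 + i)) * s (1 + i) / (1 - s (1 + i)) := by
    rw [show Finset.Icc 1 (P - 1) = Finset.Ico 1 P by
      rw [← Finset.Ico_add_one_right_eq_Icc, Nat.sub_add_cancel (by omega)]]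
    rw [Finset.sum_Ico_eq_sum_range]
    exact Finset.sum_congr rfl fun i _ => by push_cast; ring
  have hcast : ((P - 1 : ℕ) : ℝ) = (P : ℝ) - 1 := by
    rw [Nat.cast_sub (by omega)]; norm_num
  rw [hIcc]
  have : ∑ i ∈ Finset.range (P - 1), (((P : ℝ) - (i + 1)) * s (i + 1) / (1 - s (i + 1)))
      = ∑ i ∈ Finset.range (P - 1), ((P : ℝ) - (1 + i)) * s (1 + i) / (1 - s (1 + i)) := by
    apply Finset.sum_congr rfl
    intro i _
    rw [add_comm 1 i]
    ring
  rw [this] at htel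
  simp only [nsmul_eq_mul, mul_one, hbd2] at htel
  rw [hcast] at htel
  linarith
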